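/- If a ∈ L²(γ) is supported in an admissible ball B with ‖a‖_{L²(γ)} ≤ γ(B)^{-1/2}, and w(x) = 1 + |x|^{k-2} for k ≥ 3, then ‖a‖_{L¹(wγ)} ≤ 1 + 2^{k-2}. -/

import Mathlib

open MeasureTheory
open scoped ENNReal NNReal

/-- The `n`-dimensional Gaussian measure `dγ(x) = π^{-n/2} e^{-|x|²} dx`. -/
noncomputable def gaussianMeasure (n : ℕ) : Measure (EuclideanSpace ℝ (Fin n)) :=
  volume.withDensity fun x =>
    ENNReal.ofReal (Real.pi ^ (-(n : ℝ) / 2) * Real.exp (-‖x‖ ^ 2))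

/-- If `a ∈ L²(γ)` is supported in an admissible ball `B = B(c,r)`
with the atom norm bound `‖a‖_{L²(γ)} ≤ r^{k-2} γ(B)^{-1/2}` (weight factor
`ω_k(r) = r^{k-2}`), and `w(x) = 1 + |x|^{k-2}` for `k ≥ 3`, then
`‖a‖_{L¹(wγ)} = ∫ |a| w dγ ≤ 1 + 2^{k-2}`. -/
theorem atom_weighted_L1_bound {n : ℕ} (k : ℕ) (hk : 3 ≤ k)
    (c : EuclideanSpace ℝ (Fin n)) (r : ℝ) (hr : 0 < r)
    (hadm : r ≤ (if ‖c‖ ≤ 1 then 1 else ‖c‖⁻¹))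
    (a : EuclideanSpace ℝ (Fin n) → ℝ)
    (ha : MemLp a 2 (gaussianMeasure n))
    (hsupp : Function.support a ⊆ Metric.ball c r)
    (hnorm : eLpNorm a 2 (gaussianMeasure n)
      ≤ ENNReal.ofReal (r ^ (k - 2)) *
          (gaussianMeasure n (Metric.ball c r)) ^ (-(1 : ℝ) / 2)) :
    (∫ x, |a x| * (1 + ‖x‖ ^ (k - 2)) ∂(gaussianMeasure n)) ≤ 1 + 2 ^ (k - 2) := by
  set ν := gaussianMeasure n with hνdef
  set B := Metric.ball c r with hBdef
  -- basic admissibility consequences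
  have hr1 : r ≤ 1 := by
    rcases le_or_gt ‖c‖ 1 with h | h
    · simpa [h] using hadm
    · have h2 : r ≤ ‖c‖⁻¹ := by simpa [h.not_ge] using hadm
      have : ‖c‖⁻¹ ≤ 1 := by
        rw [inv_le_one_iff₀]; right; exact h.le
      linarith
  have hcr : ‖c‖ * r ≤ 1 := by
    rcases le_or_gt ‖c‖ 1 with h | h
    · nlinarith [norm_nonneg c]
    · have h2 : r ≤ ‖c‖⁻¹ := by simpa [h.not_ge] using hadm
      have h3 : ‖c‖ * r ≤ ‖c‖ * ‖c‖⁻¹ := by nlinarith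
      rwa [mul_inv_cancel₀ (by positivity)] at h3
  -- points of the ball are bounded by 2/r
  have hball : ∀ x ∈ B, ‖x‖ ≤ 2 / r := by
    intro x hx
    have h1 : ‖x - c‖ < r := by
      simpa [dist_eq_norm] using (Metric.mem_ball.1 hx)
    have h2 : ‖x‖ ≤ ‖x - c‖ + ‖c‖ := by
      simpa using norm_add_le (x - c) c
    rw [le_div_iff₀ hr]
    nlinarith [norm_nonneg (x - c), norm_nonneg c, norm_nonneg x]
  set M : ℝ := 1 + (2 / r) ^ (k - 2) with hMdef
  have hM0 : 0 ≤ M := by positivity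
  -- pointwise bound
  have hpt : ∀ x, |a x| * (1 + ‖x‖ ^ (k - 2)) ≤ M * |a x| := by
    intro x
    by_cases hx : a x = 0
    · simp [hx]
    · have hxB : x ∈ B := hsupp hx
      have h1 : ‖x‖ ^ (k - 2) ≤ (2 / r) ^ (k - 2) :=
        pow_le_pow_left₀ (norm_nonneg x) (hball x hxB) _
      have h2 := mul_le_mul_of_nonneg_left (by rw [hMdef]; linarith : 1 + ‖x‖ ^ (k - 2) ≤ M) (abs_nonneg (a x))
      rw [mul_comm M]
      exact h2
  -- measure of the ball is positive and finite
  have hBmeas : MeasurableSet B := Metric.isOpen_ball.measurableSet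
  have hνB : ν B = ∫⁻ x in B,
      ENNReal.ofReal (Real.pi ^ (-(n : ℝ) / 2) * Real.exp (-‖x‖ ^ 2)) := by
    rw [hνdef]; exact withDensity_apply _ hBmeas
  have hpipos : (0 : ℝ) < Real.pi ^ (-(n : ℝ) / 2) := by positivity
  have hνB_ne_top : ν B ≠ ⊤ := by
    have hle : ν B ≤ ENNReal.ofReal (Real.pi ^ (-(n : ℝ) / 2)) * volume B := by
      rw [hνB, ← setLIntegral_const B (ENNReal.ofReal (Real.pi ^ (-(n : ℝ) / 2)))]
      refine setLIntegral_mono' hBmeas fun x _ => ENNReal.ofReal_le_ofReal ?_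
      have h1 : Real.exp (-‖x‖ ^ 2) ≤ 1 := Real.exp_le_one_iff.2 (by nlinarith [sq_nonneg ‖x‖])
      nlinarith
    exact ne_top_of_le_ne_top
      (ENNReal.mul_ne_top ENNReal.ofReal_ne_top measure_ball_lt_top.ne) hle
  have hνB_ne_zero : ν B ≠ 0 := by
    have hεpos : (0 : ℝ) < Real.pi ^ (-(n : ℝ) / 2) * Real.exp (-(‖c‖ + r) ^ 2) := by positivity
    have hle : ENNReal.ofReal (Real.pi ^ (-(n : ℝ) / 2) * Real.exp (-(‖c‖ + r) ^ 2)) * volume B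
        ≤ ν B := by
      rw [hνB, ← setLIntegral_const B _]
      refine setLIntegral_mono' hBmeas fun x hx => ENNReal.ofReal_le_ofReal ?_
      have h1 : ‖x - c‖ < r := by simpa [dist_eq_norm] using (Metric.mem_ball.1 hx)
      have h2 : ‖x‖ ≤ ‖c‖ + r := by
        have := norm_add_le (x - c) c; simp at this
        linarith [norm_nonneg (x - c)]
      have h3 : ‖x‖ ^ 2 ≤ (‖c‖ + r) ^ 2 := by nlinarith [norm_nonneg x]
      have h4 : Real.exp (-(‖c‖ + r) ^ 2) ≤ Real.exp (-‖x‖ ^ 2) :=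
        Real.exp_le_exp.2 (by linarith)
      nlinarith
    have hpos : 0 < ENNReal.ofReal (Real.pi ^ (-(n : ℝ) / 2) * Real.exp (-(‖c‖ + r) ^ 2))
        * volume B :=
      ENNReal.mul_pos (ENNReal.ofReal_pos.2 hεpos).ne' (Metric.measure_ball_pos volume c hr).ne'
    exact (lt_of_lt_of_le hpos hle).ne'
  -- the L¹ norm of a against ν via Cauchy-Schwarz
  have haem : AEMeasurable (fun x => (‖a x‖₊ : ℝ≥0∞)) ν := ha.1.enorm
  have hL1 : ∫⁻ x, (‖a x‖₊ : ℝ≥0∞) ∂ν ≤ eLpNorm a 2 ν * (ν B) ^ ((1 : ℝ) / 2) := by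
    set f : EuclideanSpace ℝ (Fin n) → ℝ≥0∞ := fun y => (‖a y‖₊ : ℝ≥0∞) with hf
    set g : EuclideanSpace ℝ (Fin n) → ℝ≥0∞ := B.indicator (fun _ => 1) with hg
    have hind : ∀ x, f x = (f * g) x := by
      intro x
      by_cases hx : x ∈ B
      · simp [hf, hg, hx]
      · have hax : a x = 0 := by
          by_contra h; exact hx (hsupp h)
        simp [hf, hg, hax, hx, Set.indicator_of_notMem]
    calc ∫⁻ x, f x ∂ν
        = ∫⁻ x, (f * g) x ∂ν := lintegral_congr hind
      _ ≤ (∫⁻ x, f x ^ (2 : ℝ) ∂ν) ^ ((1:ℝ) / 2)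
          * (∫⁻ x, g x ^ (2 : ℝ) ∂ν) ^ ((1:ℝ) / 2) :=
          ENNReal.lintegral_mul_le_Lp_mul_Lq ν
            (⟨by norm_num, by norm_num, by norm_num⟩ : Real.HolderConjugate 2 2)
            haem (((measurable_const (a := (1:ℝ≥0∞))).indicator hBmeas).aemeasurable)
      _ = eLpNorm a 2 ν * (ν B) ^ ((1 : ℝ) / 2) := by
          congr 1
          · rw [eLpNorm_eq_lintegral_rpow_enorm_toReal (by norm_num) (by norm_num)]
            norm_num [hf, enorm_eq_nnnorm]
          · congr 1
            have hgx : ∀ x, g x ^ (2 : ℝ) = g x := by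
              intro x
              by_cases hx : x ∈ B <;> simp [hg, hx, ENNReal.zero_rpow_of_pos]
            rw [lintegral_congr hgx, hg, lintegral_indicator hBmeas, setLIntegral_one]
  have hL1' : ∫⁻ x, (‖a x‖₊ : ℝ≥0∞) ∂ν ≤ ENNReal.ofReal (r ^ (k - 2)) := by
    refine hL1.trans ?_
    calc eLpNorm a 2 ν * (ν B) ^ ((1 : ℝ) / 2)
        ≤ ENNReal.ofReal (r ^ (k - 2)) * (ν B) ^ (-(1 : ℝ) / 2) * (ν B) ^ ((1 : ℝ) / 2) :=
          mul_le_mul_left hnorm _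
      _ = ENNReal.ofReal (r ^ (k - 2)) := by
          rw [mul_assoc, ← ENNReal.rpow_add _ _ hνB_ne_zero hνB_ne_top]
          norm_num
  -- total bound on the lintegral
  have hlin : ∫⁻ x, ENNReal.ofReal (|a x| * (1 + ‖x‖ ^ (k - 2))) ∂ν
      ≤ ENNReal.ofReal (1 + 2 ^ (k - 2)) := by
    have step1 : ∫⁻ x, ENNReal.ofReal (|a x| * (1 + ‖x‖ ^ (k - 2))) ∂ν
        ≤ ∫⁻ x, ENNReal.ofReal M * (‖a x‖₊ : ℝ≥0∞) ∂ν := by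
      refine lintegral_mono fun x => ?_
      rw [← enorm_eq_nnnorm, Real.enorm_eq_ofReal_abs, ← ENNReal.ofReal_mul hM0]
      exact ENNReal.ofReal_le_ofReal (hpt x)
    have step2 : ∫⁻ x, ENNReal.ofReal M * (‖a x‖₊ : ℝ≥0∞) ∂ν
        = ENNReal.ofReal M * ∫⁻ x, (‖a x‖₊ : ℝ≥0∞) ∂ν := lintegral_const_mul'' _ haem
    calc ∫⁻ x, ENNReal.ofReal (|a x| * (1 + ‖x‖ ^ (k - 2))) ∂ν
        ≤ ENNReal.ofReal M * ∫⁻ x, (‖a x‖₊ : ℝ≥0∞) ∂ν := step2 ▸ step1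
      _ ≤ ENNReal.ofReal M * ENNReal.ofReal (r ^ (k - 2)) := mul_le_mul_right hL1' _
      _ = ENNReal.ofReal (M * r ^ (k - 2)) := (ENNReal.ofReal_mul hM0).symm
      _ ≤ ENNReal.ofReal (1 + 2 ^ (k - 2)) := by
          refine ENNReal.ofReal_le_ofReal ?_
          have h1 : (2 / r) ^ (k - 2) * r ^ (k - 2) = 2 ^ (k - 2) := by
            rw [← mul_pow, div_mul_cancel₀ _ hr.ne']
          have h2 : r ^ (k - 2) ≤ 1 := pow_le_one₀ hr.le hr1
          have h3 : (0:ℝ) < 2 ^ (k-2) := by positivity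
          calc M * r ^ (k - 2) = r ^ (k - 2) + (2 / r) ^ (k - 2) * r ^ (k - 2) := by ring
            _ = r ^ (k - 2) + 2 ^ (k - 2) := by rw [h1]
            _ ≤ 1 + 2 ^ (k - 2) := by linarith
  -- convert back to the Bochner integral
  have hgm : AEStronglyMeasurable (fun x => |a x| * (1 + ‖x‖ ^ (k - 2))) ν := by
    have h1 : AEStronglyMeasurable (fun x => |a x|) ν := by
      simpa [Real.norm_eq_abs] using ha.1.norm
    exact h1.mul ((continuous_const.add ((continuous_norm).pow (k - 2))).aestronglyMeasurable)
  have key := integral_eq_lintegral_of_nonneg_ae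
    (ae_of_all ν fun x => by positivity :
      0 ≤ᵐ[ν] fun x => |a x| * (1 + ‖x‖ ^ (k - 2))) hgm
  rw [key]
  exact ENNReal.toReal_le_of_le_ofReal (by positivity) hlin
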